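/- Let p be a prime, B a commutative F_p-algebra, and l ≥ 0 an integer with base-p expansion l = l_0 + l_1·p + ... + l_s·p^s. For the l-th symmetric power ρ_l of the tautological representation of GL_2(B) on homogeneous polynomials of degree l in X, Y, the submatrix ρ_l^⋆(γ) of ρ_l(γ) obtained by deleting the (r+1)-th row and column whenever the binomial coefficient C(l, r) is divisible by p, is a square matrix of size ∏_i (l_i + 1), and γ ↦ ρ_l^⋆(γ) defines a group homomorphism GL_2(B) → GL_{∏_i(l_i+1)}(B) isomorphic to the tensor product ρ_{l_0} ⊗ ρ_{l_1}^{(1)} ⊗ ... ⊗ ρ_{l_s}^{(s)}, where M^{(i)} denotes entrywise raising to the power p^i. -/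

import Mathlib

open Polynomial

/-- The matrix of the `r`-th symmetric power `ρ_r` of the tautological representation of
`GL_2(B)`, in the basis `X^{r-i}Y^i` (`i = 0, …, r`): the `(j,i)` entry is the coefficient
of `X^{r-j}Y^j` in `(aX + cY)^{r-i} (bX + dY)^i`, computed after dehomogenizing `Y = 1`. -/
noncomputable def symPowMat {B : Type*} [CommRing B] (r : ℕ) (g : Matrix (Fin 2) (Fin 2) B) :
    Matrix (Fin (r + 1)) (Fin (r + 1)) B :=
  Matrix.of fun j i =>
    (((C (g 0 0)) * X + C (g 1 0)) ^ (r - (i : ℕ)) *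
        ((C (g 0 1)) * X + C (g 1 1)) ^ (i : ℕ)).coeff (r - (j : ℕ))

/-- The index set of `ρ_l^⋆`: those `0 ≤ r ≤ l` with `p ∤ C(l,r)`. -/
abbrev goodIdx (p l : ℕ) := {r : Fin (l + 1) // ¬ p ∣ Nat.choose l (r : ℕ)}

/-- The submatrix `ρ_l^⋆(γ)` of `ρ_l(γ)` keeping the rows and columns indexed by `r` with
`p ∤ C(l,r)`. -/
noncomputable def rhoStar {B : Type*} [CommRing B] (p l : ℕ) (g : Matrix (Fin 2) (Fin 2) B) :
    Matrix (goodIdx p l) (goodIdx p l) B :=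
  Matrix.of fun j i => symPowMat l g j.1 i.1

/-- The index set of the tensor product `ρ_{l_0} ⊗ ρ_{l_1}^{(1)} ⊗ ⋯ ⊗ ρ_{l_s}^{(s)}`,
where `l = l_0 + l_1 p + ⋯ + l_s p^s` is the base-`p` expansion. -/
abbrev tensorIdx (p l : ℕ) := (i : Fin (Nat.digits p l).length) → Fin ((Nat.digits p l).get i + 1)

/-- The matrix of the tensor product `ρ_{l_0} ⊗ ρ_{l_1}^{(1)} ⊗ ⋯ ⊗ ρ_{l_s}^{(s)}`, where
`M^{(i)}` is the entrywise `p^i`-th power Frobenius twist. -/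
noncomputable def rhoTensor {B : Type*} [CommRing B] (p l : ℕ) (g : Matrix (Fin 2) (Fin 2) B) :
    Matrix (tensorIdx p l) (tensorIdx p l) B :=
  Matrix.of fun j i =>
    ∏ k : Fin (Nat.digits p l).length,
      symPowMat ((Nat.digits p l).get k) (g.map (· ^ p ^ (k : ℕ))) (j k) (i k)

namespace SP5

/-- base-`p` digit -/
def dig (p k n : ℕ) : ℕ := n / p ^ k % p

lemma dig_zero (p n : ℕ) : dig p 0 n = n % p := by simp [dig]

lemma dig_succ (p k n : ℕ) : dig p (k+1) n = dig p k (n / p) := by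
  simp [dig, Nat.div_div_eq_div_mul, pow_succ']

lemma dig_lt {p : ℕ} (hp : 1 < p) (k n : ℕ) : dig p k n < p := Nat.mod_lt _ (by omega)

lemma digitSum {p : ℕ} (hp : 1 < p) :
    ∀ n r, r < p ^ n → ∑ k ∈ Finset.range n, dig p k r * p ^ k = r := by
  intro n
  induction n with
  | zero =>
    intro r hr
    rw [pow_zero] at hr
    have : r = 0 := by omega
    subst this; simp
  | succ n ih =>
    intro r hr
    rw [Finset.sum_range_succ']
    have h1 : ∀ k, dig p (k+1) r * p ^ (k+1) = p * (dig p k (r / p) * p ^ k) := by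
      intro k; rw [dig_succ]; ring
    simp only [h1, ← Finset.mul_sum]
    rw [ih (r / p) (by
      apply Nat.div_lt_of_lt_mul; rw [← pow_succ']; exact hr)]
    rw [dig_zero, pow_zero, mul_one]
    have h2 := Nat.mod_add_div r p
    omega

lemma digOfSum {p : ℕ} (hp : 1 < p) :
    ∀ n (t : ℕ → ℕ), (∀ k, k < n → t k < p) → ∀ m,
      dig p m (∑ k ∈ Finset.range n, t k * p ^ k) = if m < n then t m else 0 := by
  intro n
  induction n with
  | zero => intro t ht m; simp [dig]
  | succ n ih =>
    intro t ht m
    rw [Finset.sum_range_succ']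
    have h1 : ∀ k, t (k+1) * p ^ (k+1) = p * (t (k+1) * p ^ k) := by intro k; ring
    simp only [h1, ← Finset.mul_sum, pow_zero, mul_one]
    set S := ∑ k ∈ Finset.range n, t (k+1) * p ^ k with hS
    have ht0 : t 0 < p := ht 0 (by omega)
    match m with
    | 0 => rw [dig_zero, Nat.mul_add_mod, Nat.mod_eq_of_lt ht0]; simp
    | m+1 =>
      rw [dig_succ]
      have : (p * S + t 0) / p = S := by
        rw [Nat.mul_add_div (by omega), Nat.div_eq_of_lt ht0, add_zero]
      rw [this, ih (fun k => t (k+1)) (fun k hk => ht (k+1) (by omega)) m]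
      simp [Nat.succ_lt_succ_iff]

lemma dig_of_ge {p : ℕ} (hp : 1 < p) {n k r : ℕ} (hr : r < p ^ n) (hk : n ≤ k) :
    dig p k r = 0 := by
  have : r < p ^ k := lt_of_lt_of_le hr (Nat.pow_le_pow_right (by omega) hk)
  simp [dig, Nat.div_eq_of_lt this]

lemma digits_getD {p : ℕ} (hp : 1 < p) :
    ∀ k (l : ℕ), (Nat.digits p l).getD k 0 = dig p k l := by
  intro k
  induction k with
  | zero =>
    intro l
    rcases eq_or_ne l 0 with rfl | hl
    · simp [dig]
    · rw [Nat.digits_def' hp (Nat.pos_of_ne_zero hl), List.getD_cons_zero, dig_zero]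
  | succ k ih =>
    intro l
    rcases eq_or_ne l 0 with rfl | hl
    · simp [dig]
    · rw [Nat.digits_def' hp (Nat.pos_of_ne_zero hl), List.getD_cons_succ, ih, dig_succ]

lemma digits_get {p : ℕ} (hp : 1 < p) (k : ℕ) (l : ℕ) (h : k < (Nat.digits p l).length) :
    (Nat.digits p l).get ⟨k, h⟩ = dig p k l := by
  rw [List.get_eq_getElem, ← List.getD_eq_getElem _ 0 h, digits_getD hp]

/-- Lucas characterization. -/
lemma small_choose {p : ℕ} (hp : p.Prime) {a b : ℕ} (ha : a < p) :
    ¬ p ∣ Nat.choose a b ↔ b ≤ a := by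
  constructor
  · intro h; by_contra hb
    exact h (by rw [Nat.choose_eq_zero_of_lt (by omega)]; exact dvd_zero p)
  · intro hba hdvd
    have h1 : p ∣ Nat.factorial a := by
      rw [← Nat.choose_mul_factorial_mul_factorial hba]
      exact dvd_mul_of_dvd_left (dvd_mul_of_dvd_left hdvd _) _
    have := (Nat.Prime.dvd_factorial hp).1 h1
    omega

lemma good_iff {p : ℕ} (hp : p.Prime) :
    ∀ l r : ℕ, r ≤ l → (¬ p ∣ Nat.choose l r ↔ ∀ k, dig p k r ≤ dig p k l) := by
  haveI : Fact p.Prime := ⟨hp⟩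
  intro l
  induction l using Nat.strong_induction_on with
  | _ l IH =>
    intro r hr
    rcases eq_or_ne l 0 with rfl | hl
    · interval_cases r
      simp [Nat.dvd_one, hp.ne_one]
    · have hp1 := hp.one_lt
      have hmod := Choose.choose_modEq_choose_mod_mul_choose_div_nat (p := p) (n := l) (k := r)
      have hdvd : p ∣ Nat.choose l r ↔
          p ∣ Nat.choose (l % p) (r % p) * Nat.choose (l / p) (r / p) := by
        rw [Nat.dvd_iff_mod_eq_zero, Nat.dvd_iff_mod_eq_zero, hmod]
      have hsplit : ¬ p ∣ Nat.choose l r ↔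
          (¬ p ∣ Nat.choose (l % p) (r % p)) ∧ ¬ p ∣ Nat.choose (l / p) (r / p) := by
        rw [hdvd, hp.dvd_mul]; tauto
      rw [hsplit, small_choose hp (Nat.mod_lt _ (by omega)),
        IH (l / p) (Nat.div_lt_self (Nat.pos_of_ne_zero hl) hp1) (r / p)
          (Nat.div_le_div_right hr)]
      constructor
      · rintro ⟨h0, h1⟩ k
        match k with
        | 0 => simpa [dig_zero] using h0
        | k+1 => rw [dig_succ, dig_succ]; exact h1 k
      · intro h
        exact ⟨by simpa [dig_zero] using h 0, fun k => by
          have := h (k+1); rwa [dig_succ, dig_succ] at this⟩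



/-! ### single-variable entries -/

variable {B : Type*} [CommRing B]

/-- ℕ-indexed entry of the symmetric power matrix. -/
noncomputable def sEnt (r j i : ℕ) (g : Matrix (Fin 2) (Fin 2) B) : B :=
  (((C (g 0 0)) * X + C (g 1 0)) ^ (r - i) *
      ((C (g 0 1)) * X + C (g 1 1)) ^ i).coeff (r - j)

lemma symPowMat_apply (r : ℕ) (g : Matrix (Fin 2) (Fin 2) B) (j i : Fin (r+1)) :
    symPowMat r g j i = sEnt r j i g := rfl

lemma sEnt_one {l i j : ℕ} (hi : i ≤ l) (hj : j ≤ l) :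
    sEnt l j i (1 : Matrix (Fin 2) (Fin 2) B) = if i = j then 1 else 0 := by
  unfold sEnt
  rw [show (1 : Matrix (Fin 2) (Fin 2) B) 0 0 = 1 from Matrix.one_apply_eq 0,
    show (1 : Matrix (Fin 2) (Fin 2) B) 1 1 = 1 from Matrix.one_apply_eq 1,
    show (1 : Matrix (Fin 2) (Fin 2) B) 1 0 = 0 from Matrix.one_apply_ne (by decide),
    show (1 : Matrix (Fin 2) (Fin 2) B) 0 1 = 0 from Matrix.one_apply_ne (by decide)]
  simp only [map_one, map_zero, one_mul, zero_mul, zero_add, add_zero, one_pow, mul_one]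
  rw [Polynomial.coeff_X_pow]
  exact if_congr ⟨fun h => by omega, fun h => by omega⟩ rfl rfl

/-! ### two-variable machinery for multiplicativity -/

/-- linear form `aX + cY`. -/
noncomputable def lin2 (a c : B) : MvPolynomial (Fin 2) B :=
  MvPolynomial.C a * MvPolynomial.X 0 + MvPolynomial.C c * MvPolynomial.X 1

/-- the substitution endomorphism attached to `g`. -/
noncomputable def sub2 (g : Matrix (Fin 2) (Fin 2) B) :
    MvPolynomial (Fin 2) B →ₐ[B] MvPolynomial (Fin 2) B :=
  MvPolynomial.aeval ![lin2 (g 0 0) (g 1 0), lin2 (g 0 1) (g 1 1)]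

lemma sub2_X0 (g : Matrix (Fin 2) (Fin 2) B) :
    sub2 g (MvPolynomial.X 0) = lin2 (g 0 0) (g 1 0) := by
  simp [sub2]

lemma sub2_X1 (g : Matrix (Fin 2) (Fin 2) B) :
    sub2 g (MvPolynomial.X 1) = lin2 (g 0 1) (g 1 1) := by
  simp [sub2]

lemma sub2_comp (g h : Matrix (Fin 2) (Fin 2) B) (f : MvPolynomial (Fin 2) B) :
    sub2 g (sub2 h f) = sub2 (g * h) f := by
  have : (sub2 g).comp (sub2 h) = sub2 (g * h) := by
    apply MvPolynomial.algHom_ext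
    intro i
    fin_cases i <;>
      simp [sub2_X0, sub2_X1, lin2, Matrix.mul_apply, Fin.sum_univ_two, map_add, map_mul] <;>
      ring
  calc sub2 g (sub2 h f) = ((sub2 g).comp (sub2 h)) f := rfl
    _ = sub2 (g * h) f := by rw [this]

/-- the exponent pattern of `X^{l-j} Y^j`. -/
noncomputable def mu (l j : ℕ) : Fin 2 →₀ ℕ := Finsupp.single 0 (l - j) + Finsupp.single 1 j

lemma mu_apply0 (l j : ℕ) : mu l j 0 = l - j := by
  simp [mu, Finsupp.single_apply]

lemma mu_apply1 (l j : ℕ) : mu l j 1 = j := by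
  simp [mu, Finsupp.single_apply]

lemma fin2_cases (x : Fin 2) : x = 0 ∨ x = 1 := by
  revert x; decide

lemma eq_mu {l : ℕ} {m : Fin 2 →₀ ℕ} (hm : m 0 + m 1 = l) : m = mu l (m 1) := by
  ext x
  rcases fin2_cases x with rfl | rfl
  · rw [mu_apply0]; omega
  · rw [mu_apply1]

lemma mu_right_inj {l r r' : ℕ} (h : mu l r = mu l r') : r = r' := by
  have := congrArg (fun f : Fin 2 →₀ ℕ => f 1) h
  simpa [mu_apply1] using this

/-- the monomial `X^{l-i} Y^i`. -/
noncomputable def xp (l i : ℕ) : MvPolynomial (Fin 2) B :=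
  MvPolynomial.X 0 ^ (l - i) * MvPolynomial.X 1 ^ i

lemma degsum_eq {l : ℕ} {f : MvPolynomial (Fin 2) B} (hf : f.IsHomogeneous l)
    {m : Fin 2 →₀ ℕ} (hm : MvPolynomial.coeff m f ≠ 0) : m 0 + m 1 = l := by
  have h1 := hf hm
  rw [show (Finsupp.weight (1 : Fin 2 → ℕ)) = Finsupp.degree from
    Finsupp.degree_eq_weight_one.symm] at h1
  have h2 : Finsupp.degree m = ∑ i : Fin 2, m i := by
    rw [Finsupp.degree]
    apply Finset.sum_subset (Finset.subset_univ _)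
    intro x _ hx
    exact Finsupp.notMem_support_iff.1 hx
  rw [h2, Fin.sum_univ_two] at h1
  exact h1

lemma lin2_hom (a c : B) : (lin2 a c).IsHomogeneous 1 := by
  have h1 : (MvPolynomial.C a * MvPolynomial.X 0 : MvPolynomial (Fin 2) B).IsHomogeneous 1 := by
    simpa using (MvPolynomial.isHomogeneous_C (Fin 2) a).mul (MvPolynomial.isHomogeneous_X B 0)
  have h2 : (MvPolynomial.C c * MvPolynomial.X 1 : MvPolynomial (Fin 2) B).IsHomogeneous 1 := by
    simpa using (MvPolynomial.isHomogeneous_C (Fin 2) c).mul (MvPolynomial.isHomogeneous_X B 1)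
  exact h1.add h2

lemma xp_hom {l i : ℕ} (hi : i ≤ l) : (xp l i : MvPolynomial (Fin 2) B).IsHomogeneous l := by
  have := ((MvPolynomial.isHomogeneous_X B (0 : Fin 2)).pow (l - i)).mul
    ((MvPolynomial.isHomogeneous_X B (1 : Fin 2)).pow i)
  simpa [xp, mul_one, Nat.sub_add_cancel hi] using this

lemma sub2_xp (g : Matrix (Fin 2) (Fin 2) B) (l i : ℕ) :
    sub2 g (xp l i) = lin2 (g 0 0) (g 1 0) ^ (l - i) * lin2 (g 0 1) (g 1 1) ^ i := by
  rw [xp, map_mul, map_pow, map_pow, sub2_X0, sub2_X1]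

lemma sub2_xp_hom (g : Matrix (Fin 2) (Fin 2) B) {l i : ℕ} (hi : i ≤ l) :
    (sub2 g (xp l i)).IsHomogeneous l := by
  rw [sub2_xp]
  have := ((lin2_hom (g 0 0) (g 1 0)).pow (l - i)).mul ((lin2_hom (g 0 1) (g 1 1)).pow i)
  simpa [mul_one, Nat.sub_add_cancel hi] using this

lemma coeff_dehom {f : MvPolynomial (Fin 2) B} {l : ℕ} (hf : f.IsHomogeneous l)
    {j : ℕ} (hj : j ≤ l) :
    (MvPolynomial.aeval ![Polynomial.X, (1 : Polynomial B)] f).coeff (l - j) =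
      MvPolynomial.coeff (mu l j) f := by
  rw [MvPolynomial.aeval_def, MvPolynomial.eval₂_eq']
  rw [Polynomial.finset_sum_coeff]
  have hterm : ∀ d : Fin 2 →₀ ℕ,
      ((algebraMap B (Polynomial B)) (MvPolynomial.coeff d f) *
        ∏ i : Fin 2, (![Polynomial.X, (1 : Polynomial B)] i) ^ d i).coeff (l - j) =
      if d 0 = l - j then MvPolynomial.coeff d f else 0 := by
    intro d
    rw [Fin.prod_univ_two]
    simp only [Matrix.cons_val_zero, Matrix.cons_val_one, Matrix.head_cons, one_pow, mul_one]
    rw [Polynomial.algebraMap_eq, Polynomial.coeff_C_mul, Polynomial.coeff_X_pow]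
    split_ifs with h1 h2 h2
    · rw [mul_one]
    · omega
    · omega
    · rw [mul_zero]
  simp only [hterm]
  have hcong : ∀ d ∈ f.support,
      (if d 0 = l - j then MvPolynomial.coeff d f else 0) =
      (if d = mu l j then MvPolynomial.coeff d f else 0) := by
    intro d hd
    have hc : MvPolynomial.coeff d f ≠ 0 := MvPolynomial.mem_support_iff.1 hd
    have hdeg : d 0 + d 1 = l := degsum_eq hf hc
    congr 1
    apply propext
    constructor
    · intro h
      have h1 : d 1 = j := by omega
      have := eq_mu hdeg
      rw [h1] at this
      exact this
    · intro h
      rw [h, mu_apply0]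
  rw [Finset.sum_congr rfl hcong, Finset.sum_ite_eq' f.support (mu l j)
    (fun d => MvPolynomial.coeff d f)]
  split_ifs with h
  · rfl
  · exact (MvPolynomial.notMem_support_iff.1 h).symm

lemma sEnt_eq_coeff {l i j : ℕ} (hi : i ≤ l) (hj : j ≤ l) (g : Matrix (Fin 2) (Fin 2) B) :
    sEnt l j i g = MvPolynomial.coeff (mu l j) (sub2 g (xp l i)) := by
  have key : MvPolynomial.aeval ![Polynomial.X, (1 : Polynomial B)] (sub2 g (xp l i)) =
      ((C (g 0 0)) * X + C (g 1 0)) ^ (l - i) * ((C (g 0 1)) * X + C (g 1 1)) ^ i := by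
    rw [sub2_xp, map_mul, map_pow, map_pow]
    congr 1 <;>
    · congr 1
      simp [lin2, map_add, map_mul, MvPolynomial.aeval_C, Polynomial.algebraMap_eq]
  rw [sEnt, ← key, coeff_dehom (sub2_xp_hom g hi) hj]

lemma homog_decomp {l : ℕ} {f : MvPolynomial (Fin 2) B} (hf : f.IsHomogeneous l) :
    f = ∑ r ∈ Finset.range (l + 1),
      MvPolynomial.monomial (mu l r) (MvPolynomial.coeff (mu l r) f) := by
  apply MvPolynomial.ext
  intro m
  rw [MvPolynomial.coeff_sum]
  simp only [MvPolynomial.coeff_monomial]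
  by_cases h0 : MvPolynomial.coeff m f = 0
  · rw [h0]
    symm
    apply Finset.sum_eq_zero
    intro r _
    split_ifs with h
    · rw [h]; exact h0
    · rfl
  · have hdeg : m 0 + m 1 = l := degsum_eq hf h0
    have hm : m = mu l (m 1) := eq_mu hdeg
    have hcong : ∀ r ∈ Finset.range (l + 1),
        (if mu l r = m then MvPolynomial.coeff (mu l r) f else 0) =
        (if r = m 1 then MvPolynomial.coeff (mu l r) f else 0) := by
      intro r _
      congr 1
      apply propext
      constructor
      · intro h; exact mu_right_inj (h.trans hm)
      · intro h; rw [h, ← hm]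
    rw [Finset.sum_congr rfl hcong,
      Finset.sum_ite_eq' (Finset.range (l + 1)) (m 1) (fun r => MvPolynomial.coeff (mu l r) f)]
    rw [if_pos (Finset.mem_range.2 (by omega)), ← hm]

lemma monomial_mu (l r : ℕ) (c : B) :
    MvPolynomial.monomial (mu l r) c = MvPolynomial.C c * xp l r := by
  rw [MvPolynomial.monomial_eq, xp]
  congr 1
  rw [Finsupp.prod_pow, Fin.prod_univ_two, mu_apply0, mu_apply1]

lemma sEnt_mul {l i j : ℕ} (hi : i ≤ l) (hj : j ≤ l) (g h : Matrix (Fin 2) (Fin 2) B) :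
    sEnt l j i (g * h) = ∑ r ∈ Finset.range (l + 1), sEnt l j r g * sEnt l r i h := by
  rw [sEnt_eq_coeff hi hj, ← sub2_comp,
    homog_decomp (sub2_xp_hom h hi), map_sum, MvPolynomial.coeff_sum]
  apply Finset.sum_congr rfl
  intro r hr
  have hrl : r ≤ l := by
    have := Finset.mem_range.1 hr; omega
  rw [monomial_mu, map_mul, show (sub2 g) (MvPolynomial.C (MvPolynomial.coeff (mu l r)
      (sub2 h (xp l i)))) = MvPolynomial.C (MvPolynomial.coeff (mu l r) (sub2 h (xp l i)))
    from by rw [show (MvPolynomial.C : B →+* MvPolynomial (Fin 2) B) =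
        algebraMap B (MvPolynomial (Fin 2) B) from rfl]; exact (sub2 g).commutes _]
  rw [MvPolynomial.coeff_C_mul, ← sEnt_eq_coeff hrl hj, ← sEnt_eq_coeff hi hrl]
  ring

lemma symPowMat_mul (l : ℕ) (g h : Matrix (Fin 2) (Fin 2) B) :
    symPowMat l (g * h) = symPowMat l g * symPowMat l h := by
  ext j i
  rw [Matrix.mul_apply, symPowMat_apply, sEnt_mul (Fin.is_le i) (Fin.is_le j)]
  rw [← Fin.sum_univ_eq_sum_range (fun r => sEnt l (j : ℕ) r g * sEnt l r (i : ℕ) h) (l + 1)]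
  rfl

/-! ### characteristic `p` -/

section CharP

variable {p : ℕ} [hpf : Fact p.Prime] [CharP B p]

lemma coeff_mul_expand {A : Polynomial B} (hA : A.natDegree < p) (Q : Polynomial B) (n : ℕ) :
    (A * Polynomial.expand B p Q).coeff n = A.coeff (n % p) * Q.coeff (n / p) := by
  have hp0 : 0 < p := hpf.out.pos
  rw [Polynomial.coeff_mul]
  have hmem : ((n % p, n - n % p)) ∈ Finset.HasAntidiagonal.antidiagonal n := by
    rw [Finset.HasAntidiagonal.mem_antidiagonal]
    have := Nat.mod_le n p
    omega
  rw [Finset.sum_eq_single_of_mem _ hmem]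
  · have h1 : n - n % p = p * (n / p) := by
      have := Nat.mod_add_div n p
      omega
    rw [Polynomial.coeff_expand hp0, h1, if_pos (Dvd.intro _ rfl),
      Nat.mul_div_cancel_left _ hp0]
  · rintro ⟨m, k⟩ hb hne
    rw [Finset.HasAntidiagonal.mem_antidiagonal] at hb
    rw [Polynomial.coeff_expand hp0]
    split_ifs with hd
    · by_cases hm : A.coeff m = 0
      · rw [hm, zero_mul]
      · exfalso
        obtain ⟨t, rfl⟩ := hd
        have hmlt : m ≤ A.natDegree := Polynomial.le_natDegree_of_ne_zero hm
        have hmp : m = n % p := by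
          rw [← hb, Nat.add_mul_mod_self_left, Nat.mod_eq_of_lt (by omega)]
        apply hne
        simp only [Prod.mk.injEq]
        omega
    · rw [mul_zero]

lemma pow_char_linear (a c : B) :
    ((C a * X + C c : Polynomial B)) ^ p = Polynomial.expand B p (C (a ^ p) * X + C (c ^ p)) := by
  rw [add_pow_char, mul_pow, ← Polynomial.C_pow, ← Polynomial.C_pow, map_add, map_mul,
    Polynomial.expand_C, Polynomial.expand_C, Polynomial.expand_X]

lemma poly_split' (a c b d : B) (m0 m1 i0 i1 : ℕ) :
    ((C a * X + C c) ^ (m0 + p * m1) * (C b * X + C d) ^ (i0 + p * i1) : Polynomial B)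
    = ((C a * X + C c) ^ m0 * (C b * X + C d) ^ i0) *
      Polynomial.expand B p ((C (a ^ p) * X + C (c ^ p)) ^ m1 * (C (b ^ p) * X + C (d ^ p)) ^ i1) := by
  rw [pow_add, pow_add, pow_mul, pow_mul, pow_char_linear (p := p) a c,
    pow_char_linear (p := p) b d, ← map_pow, ← map_pow, map_mul]
  ring

lemma natDeg_A (a c b d : B) (m n : ℕ) :
    ((C a * X + C c) ^ m * (C b * X + C d) ^ n : Polynomial B).natDegree ≤ m + n := by
  apply le_trans (Polynomial.natDegree_mul_le)
  have h1 := le_trans (Polynomial.natDegree_pow_le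
    (p := (C a * X + C c : Polynomial B)) (n := m))
    (Nat.mul_le_mul_left m (Polynomial.natDegree_linear_le (a := a) (b := c)))
  have h2 := le_trans (Polynomial.natDegree_pow_le
    (p := (C b * X + C d : Polynomial B)) (n := n))
    (Nat.mul_le_mul_left n (Polynomial.natDegree_linear_le (a := b) (b := d)))
  omega

/-- the matrix of `p`-th powers -/
lemma map_pow_apply (g : Matrix (Fin 2) (Fin 2) B) (n : ℕ) (x y : Fin 2) :
    (g.map (· ^ n)) x y = (g x y) ^ n := rfl

lemma sEnt_split (g : Matrix (Fin 2) (Fin 2) B) {l j i : ℕ}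
    (hi0 : i % p ≤ l % p) (hi1 : i / p ≤ l / p)
    (hj0 : j % p ≤ l % p) (hj1 : j / p ≤ l / p) :
    sEnt l j i g =
      sEnt (l % p) (j % p) (i % p) g * sEnt (l / p) (j / p) (i / p) (g.map (· ^ p)) := by
  have hp0 : 0 < p := hpf.out.pos
  have hp1 : 1 < p := hpf.out.one_lt
  have hlp := Nat.mod_lt l hp0
  have hdecl : l - i = (l % p - i % p) + p * (l / p - i / p) := by
    have h1 := Nat.mod_add_div l p
    have h2 := Nat.mod_add_div i p
    have h3 : p * (l / p - i / p) = p * (l / p) - p * (i / p) := Nat.mul_sub p _ _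
    have h4 : p * (i / p) ≤ p * (l / p) := Nat.mul_le_mul_left p hi1
    omega
  have hdeci : i = i % p + p * (i / p) := (Nat.mod_add_div i p).symm
  have hdecj : l - j = (l % p - j % p) + p * (l / p - j / p) := by
    have h1 := Nat.mod_add_div l p
    have h2 := Nat.mod_add_div j p
    have h3 : p * (l / p - j / p) = p * (l / p) - p * (j / p) := Nat.mul_sub p _ _
    have h4 : p * (j / p) ≤ p * (l / p) := Nat.mul_le_mul_left p hj1
    omega
  have hps := poly_split' (p := p) (g 0 0) (g 1 0) (g 0 1) (g 1 1)
    (l % p - i % p) (l / p - i / p) (i % p) (i / p)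
  rw [← hdecl, ← hdeci] at hps
  unfold sEnt
  rw [hps]
  rw [coeff_mul_expand (p := p) (lt_of_le_of_lt (natDeg_A _ _ _ _ _ _)
      (show l % p - i % p + i % p < p by omega)), hdecj,
    Nat.add_mul_mod_self_left, Nat.mod_eq_of_lt (show l % p - j % p < p by omega),
    Nat.add_mul_div_left _ _ hp0,
    Nat.div_eq_of_lt (show l % p - j % p < p by omega), zero_add]
  rfl

lemma sEnt_bad0 (g : Matrix (Fin 2) (Fin 2) B) {l j i : ℕ}
    (hi0 : i % p ≤ l % p) (hi1 : i / p ≤ l / p)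
    (hjl : j ≤ l) (hj0 : l % p < j % p) :
    sEnt l j i g = 0 := by
  have hp0 : 0 < p := hpf.out.pos
  have hjp := Nat.mod_lt j hp0
  have hlp := Nat.mod_lt l hp0
  have hj1 : j / p < l / p := by
    by_contra hcon
    push_neg at hcon
    have h1 := Nat.mod_add_div l p
    have h2 := Nat.mod_add_div j p
    have h4 : p * (l / p) ≤ p * (j / p) := Nat.mul_le_mul_left p hcon
    omega
  have hdecl : l - i = (l % p - i % p) + p * (l / p - i / p) := by
    have h1 := Nat.mod_add_div l p
    have h2 := Nat.mod_add_div i p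
    have h3 : p * (l / p - i / p) = p * (l / p) - p * (i / p) := Nat.mul_sub p _ _
    have h4 : p * (i / p) ≤ p * (l / p) := Nat.mul_le_mul_left p hi1
    omega
  have hdeci : i = i % p + p * (i / p) := (Nat.mod_add_div i p).symm
  have hdecj : l - j = (p + l % p - j % p) + p * (l / p - j / p - 1) := by
    have h1 := Nat.mod_add_div l p
    have h2 := Nat.mod_add_div j p
    have h3 : p * (l / p - j / p - 1) = p * (l / p) - p * (j / p) - p * 1 := by
      rw [Nat.mul_sub p _ 1, Nat.mul_sub p _ _]
    have h4 : p * (j / p) + p ≤ p * (l / p) := by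
      have := Nat.mul_le_mul_left p (by omega : j / p + 1 ≤ l / p)
      rw [Nat.mul_add, Nat.mul_one] at this
      omega
    omega
  have hps := poly_split' (p := p) (g 0 0) (g 1 0) (g 0 1) (g 1 1)
    (l % p - i % p) (l / p - i / p) (i % p) (i / p)
  rw [← hdecl, ← hdeci] at hps
  unfold sEnt
  rw [hps]
  rw [coeff_mul_expand (p := p) (lt_of_le_of_lt (natDeg_A _ _ _ _ _ _)
      (show l % p - i % p + i % p < p by omega)), hdecj,
    Nat.add_mul_mod_self_left, Nat.mod_eq_of_lt (show p + l % p - j % p < p by omega)]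
  rw [Polynomial.coeff_eq_zero_of_natDegree_lt
    (lt_of_le_of_lt (natDeg_A _ _ _ _ _ _)
      (show l % p - i % p + i % p < p + l % p - j % p by omega)), zero_mul]

lemma map_one_pow (g : Matrix (Fin 2) (Fin 2) B) : g.map (· ^ p ^ 0) = g := by
  ext x y
  simp [Matrix.map_apply]

lemma map_map_pow (g : Matrix (Fin 2) (Fin 2) B) (k : ℕ) :
    (g.map (· ^ p)).map (· ^ p ^ k) = g.map (· ^ p ^ (k + 1)) := by
  ext x y
  simp only [Matrix.map_apply, ← pow_mul, pow_succ']

lemma lemA :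
    ∀ l (g : Matrix (Fin 2) (Fin 2) B) (i j : ℕ), i ≤ l → j ≤ l →
      (∀ k, dig p k i ≤ dig p k l) → (∀ k, dig p k j ≤ dig p k l) →
      sEnt l j i g = ∏ k ∈ Finset.range (Nat.digits p l).length,
        sEnt (dig p k l) (dig p k j) (dig p k i) (g.map (· ^ p ^ k)) := by
  intro l
  induction l using Nat.strong_induction_on with
  | _ l IH =>
    intro g i j hi hj hdi hdj
    rcases eq_or_ne l 0 with rfl | hl
    · have : i = 0 := by omega
      subst this
      have : j = 0 := by omega
      subst this
      simp [sEnt]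
    · have hp1 : 1 < p := hpf.out.one_lt
      have hpos : 0 < l := Nat.pos_of_ne_zero hl
      have hi0 : i % p ≤ l % p := by simpa [dig_zero] using hdi 0
      have hj0 : j % p ≤ l % p := by simpa [dig_zero] using hdj 0
      have hi1 : i / p ≤ l / p := Nat.div_le_div_right hi
      have hj1 : j / p ≤ l / p := Nat.div_le_div_right hj
      rw [sEnt_split g hi0 hi1 hj0 hj1]
      rw [IH (l / p) (Nat.div_lt_self hpos hp1) (g.map (· ^ p)) (i / p) (j / p) hi1 hj1
        (fun k => by have := hdi (k + 1); rwa [dig_succ, dig_succ] at this)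
        (fun k => by have := hdj (k + 1); rwa [dig_succ, dig_succ] at this)]
      rw [Nat.digits_def' hp1 hpos, List.length_cons, Finset.prod_range_succ']
      rw [mul_comm]
      congr 1
      · apply Finset.prod_congr rfl
        intro k _
        rw [dig_succ, dig_succ, dig_succ, map_map_pow]
      · rw [dig_zero, dig_zero, dig_zero, map_one_pow]

lemma lemB :
    ∀ l (g : Matrix (Fin 2) (Fin 2) B) (i j : ℕ), i ≤ l → j ≤ l →
      (∀ k, dig p k i ≤ dig p k l) → (∃ k, dig p k l < dig p k j) →
      sEnt l j i g = 0 := by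
  intro l
  induction l using Nat.strong_induction_on with
  | _ l IH =>
    intro g i j hi hj hdi hdj
    rcases eq_or_ne l 0 with rfl | hl
    · exfalso
      obtain ⟨k, hk⟩ := hdj
      have : j = 0 := by omega
      subst this
      simp at hk
    · have hp1 : 1 < p := hpf.out.one_lt
      have hpos : 0 < l := Nat.pos_of_ne_zero hl
      have hi0 : i % p ≤ l % p := by simpa [dig_zero] using hdi 0
      have hi1 : i / p ≤ l / p := Nat.div_le_div_right hi
      by_cases hj0 : j % p ≤ l % p
      · have hj1 : j / p ≤ l / p := Nat.div_le_div_right hj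
        rw [sEnt_split g hi0 hi1 hj0 hj1]
        rw [IH (l / p) (Nat.div_lt_self hpos hp1) (g.map (· ^ p)) (i / p) (j / p) hi1 hj1
          (fun k => by have := hdi (k + 1); rwa [dig_succ, dig_succ] at this) ?_, mul_zero]
        obtain ⟨k, hk⟩ := hdj
        match k with
        | 0 =>
          exfalso
          rw [dig_zero, dig_zero] at hk
          omega
        | k + 1 =>
          rw [dig_succ, dig_succ] at hk
          exact ⟨k, hk⟩
      · exact sEnt_bad0 g hi0 hi1 hj (by omega)

end CharP

/-! ### the digit equivalence -/

section Equiv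

variable {p : ℕ} {l : ℕ}

lemma good_digits (hp : p.Prime) {l : ℕ} (r : goodIdx p l) (k : ℕ) : dig p k r.1 ≤ dig p k l :=
  (good_iff hp l r.1 (Nat.lt_succ_iff.1 r.1.2)).1 r.2 k

lemma get_digits (hp1 : 1 < p) {l : ℕ} (k : Fin (Nat.digits p l).length) :
    (Nat.digits p l).get k = dig p (k : ℕ) l :=
  digits_get hp1 k.1 l k.2

/-- extension of a tensor index to a function on `ℕ`. -/
def tval (t : tensorIdx p l) (m : ℕ) : ℕ :=
  if h : m < (Nat.digits p l).length then (t ⟨m, h⟩ : ℕ) else 0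

lemma tval_le (hp1 : 1 < p) (t : tensorIdx p l) (m : ℕ) : tval t m ≤ dig p m l := by
  unfold tval
  split_ifs with h
  · have := Nat.lt_succ_iff.1 (t ⟨m, h⟩).2
    exact le_trans this (le_of_eq (get_digits hp1 ⟨m, h⟩))
  · exact Nat.zero_le _

lemma tval_lt (hp1 : 1 < p) (t : tensorIdx p l) (m : ℕ) : tval t m < p :=
  lt_of_le_of_lt (tval_le hp1 t m) (dig_lt hp1 m l)

/-- the number encoded by a tensor index. -/
def tsum (t : tensorIdx p l) : ℕ :=
  ∑ k ∈ Finset.range (Nat.digits p l).length, tval t k * p ^ k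

lemma tsum_le (hp1 : 1 < p) (t : tensorIdx p l) : tsum t ≤ l := by
  calc tsum t ≤ ∑ k ∈ Finset.range (Nat.digits p l).length, dig p k l * p ^ k :=
        Finset.sum_le_sum fun k _ => Nat.mul_le_mul_right _ (tval_le hp1 t k)
    _ = l := digitSum hp1 _ l (Nat.lt_base_pow_length_digits hp1)

lemma dig_tsum (hp1 : 1 < p) (t : tensorIdx p l) (m : ℕ) :
    dig p m (tsum t) = if m < (Nat.digits p l).length then tval t m else 0 :=
  digOfSum hp1 _ _ (fun k _ => tval_lt hp1 t k) m

lemma tsum_good (hp1 : 1 < p) (t : tensorIdx p l) (k : ℕ) :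
    dig p k (tsum t) ≤ dig p k l := by
  rw [dig_tsum hp1]
  split_ifs with h
  · exact tval_le hp1 t k
  · exact Nat.zero_le _

/-- the natural equivalence between `goodIdx` and `tensorIdx`. -/
def digEquiv (hp : p.Prime) (l : ℕ) : goodIdx p l ≃ tensorIdx p l where
  toFun r k := ⟨dig p (k : ℕ) r.1, by
    rw [Nat.lt_succ_iff, get_digits hp.one_lt]
    exact good_digits hp r k⟩
  invFun t := ⟨⟨tsum t, Nat.lt_succ_of_le (tsum_le hp.one_lt t)⟩, by
    rw [good_iff hp l _ (tsum_le hp.one_lt t)]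
    exact tsum_good hp.one_lt t⟩
  left_inv r := by
    apply Subtype.ext
    apply Fin.ext
    show tsum _ = r.1.1
    trans (∑ k ∈ Finset.range (Nat.digits p l).length, dig p k r.1.1 * p ^ k)
    · unfold tsum
      apply Finset.sum_congr rfl
      intro k hk
      rw [Finset.mem_range] at hk
      unfold tval
      rw [dif_pos hk]
    · exact digitSum hp.one_lt _ r.1.1
        (lt_of_le_of_lt (Nat.lt_succ_iff.1 r.1.2) (Nat.lt_base_pow_length_digits hp.one_lt))
  right_inv t := by
    funext k
    apply Fin.ext
    show dig p (k : ℕ) (tsum t) = (t k : ℕ)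
    rw [dig_tsum hp.one_lt, if_pos k.2]
    unfold tval
    rw [dif_pos k.2]

lemma digEquiv_apply (hp : p.Prime) (l : ℕ) (r : goodIdx p l)
    (k : Fin (Nat.digits p l).length) :
    ((digEquiv hp l r) k : ℕ) = dig p (k : ℕ) r.1 := rfl

end Equiv

/-! ### rhoStar lemmas and final assembly -/

lemma sEnt_congr {r r' j j' i i' : ℕ} (hr : r = r') (hj : j = j') (hi : i = i')
    (g : Matrix (Fin 2) (Fin 2) B) : sEnt r j i g = sEnt r' j' i' g := by
  subst hr; subst hj; subst hi; rfl

lemma rhoStar_apply (p l : ℕ) (g : Matrix (Fin 2) (Fin 2) B) (j i : goodIdx p l) :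
    rhoStar p l g j i = sEnt l j.1 i.1 g := rfl

lemma rhoStar_one (p l : ℕ) : rhoStar p l (1 : Matrix (Fin 2) (Fin 2) B) = 1 := by
  ext j i
  rw [rhoStar_apply, sEnt_one (Fin.is_le i.1) (Fin.is_le j.1), Matrix.one_apply]
  exact if_congr ⟨fun h => Subtype.ext (Fin.ext h.symm), fun h => by rw [h]⟩ rfl rfl

section FinalCharP

variable {p : ℕ} [hpf : Fact p.Prime] [CharP B p]

lemma rhoStar_mul (l : ℕ) (M N : Matrix (Fin 2) (Fin 2) B) :
    rhoStar p l (M * N) = rhoStar p l M * rhoStar p l N := by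
  ext j i
  rw [Matrix.mul_apply, rhoStar_apply, sEnt_mul (Fin.is_le i.1) (Fin.is_le j.1)]
  rw [← Fin.sum_univ_eq_sum_range (fun r => sEnt l (j.1 : ℕ) r M * sEnt l r (i.1 : ℕ) N) (l + 1)]
  rw [← Finset.sum_filter_add_sum_filter_not Finset.univ
    (fun r : Fin (l + 1) => ¬ p ∣ Nat.choose l (r : ℕ))
    (fun r : Fin (l + 1) => sEnt l (j.1 : ℕ) (r : ℕ) M * sEnt l (r : ℕ) (i.1 : ℕ) N)]
  have hz : ∑ r ∈ Finset.filter (fun r : Fin (l + 1) => ¬ ¬ p ∣ Nat.choose l (r : ℕ))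
      Finset.univ, sEnt l (j.1 : ℕ) (r : ℕ) M * sEnt l (r : ℕ) (i.1 : ℕ) N = 0 := by
    apply Finset.sum_eq_zero
    intro r hr
    rw [Finset.mem_filter, not_not] at hr
    have hbad : ∃ k, dig p k l < dig p k (r : ℕ) := by
      by_contra hcon
      push_neg at hcon
      exact ((good_iff hpf.out l (r : ℕ) (Fin.is_le r)).2 hcon) hr.2
    rw [lemB l N i.1 r (Fin.is_le i.1) (Fin.is_le r) (good_digits hpf.out i) hbad, mul_zero]
  rw [hz, add_zero]
  exact Finset.sum_subtype _ (fun x => by simp [Finset.mem_filter])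
    (fun r : Fin (l + 1) => sEnt l (j.1 : ℕ) (r : ℕ) M * sEnt l (r : ℕ) (i.1 : ℕ) N)

lemma rhoStar_inter (hp : p.Prime) (l : ℕ) (M : Matrix (Fin 2) (Fin 2) B) :
    rhoStar p l M * Matrix.of (fun (j : goodIdx p l) (t : tensorIdx p l) =>
        if digEquiv hp l j = t then (1 : B) else 0) =
      Matrix.of (fun (j : goodIdx p l) (t : tensorIdx p l) =>
        if digEquiv hp l j = t then (1 : B) else 0) * rhoTensor p l M := by
  set e := digEquiv hp l with he
  ext j t
  rw [Matrix.mul_apply, Matrix.mul_apply]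
  simp only [Matrix.of_apply, mul_ite, mul_one, mul_zero, ite_mul, one_mul, zero_mul]
  have hL : ∀ i : goodIdx p l,
      (if e i = t then rhoStar p l M j i else 0) =
      (if i = e.symm t then rhoStar p l M j i else 0) := by
    intro i
    exact if_congr (Equiv.apply_eq_iff_eq_symm_apply e) rfl rfl
  rw [Finset.sum_congr rfl (fun i _ => hL i),
    Finset.sum_ite_eq' Finset.univ (e.symm t) (fun i => rhoStar p l M j i),
    if_pos (Finset.mem_univ _)]
  rw [Finset.sum_ite_eq Finset.univ (e j) (fun t' => rhoTensor p l M t' t),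
    if_pos (Finset.mem_univ _)]
  set i := e.symm t with hi
  have ht : t = e i := by rw [hi, Equiv.apply_symm_apply]
  rw [ht]
  show sEnt l j.1 i.1 M = rhoTensor p l M (e j) (e i)
  rw [lemA l M i.1 j.1 (Fin.is_le i.1) (Fin.is_le j.1)
    (good_digits hpf.out i) (good_digits hpf.out j)]
  rw [← Fin.prod_univ_eq_prod_range (fun k =>
    sEnt (dig p k l) (dig p k (j.1 : ℕ)) (dig p k (i.1 : ℕ)) (M.map (· ^ p ^ k)))
    (Nat.digits p l).length]
  show _ = ∏ k : Fin (Nat.digits p l).length,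
    symPowMat ((Nat.digits p l).get k) (M.map (· ^ p ^ (k : ℕ))) ((e j) k) ((e i) k)
  apply Finset.prod_congr rfl
  intro k _
  rw [symPowMat_apply]
  exact sEnt_congr (get_digits hpf.out.one_lt k).symm rfl rfl _

end FinalCharP

end SP5

/-- the submatrix `ρ_l^⋆(γ)` of the `l`-th symmetric power obtained by
deleting rows and columns at indices `r` with `p ∣ C(l,r)` is square of size
`φ_p(l) = ∏ (l_i + 1)`, the map `γ ↦ ρ_l^⋆(γ)` is a group homomorphism
`GL_2(B) → GL_{φ_p(l)}(B)`, and it is isomorphic (conjugate by an invertible matrix) to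
the tensor product `ρ_{l_0} ⊗ ρ_{l_1}^{(1)} ⊗ ⋯ ⊗ ρ_{l_s}^{(s)}`. -/
theorem stmt5 (p : ℕ) (hp : p.Prime) (B : Type*) [CommRing B] [Algebra (ZMod p) B]
    (l : ℕ) :
    Fintype.card (goodIdx p l) = ((Nat.digits p l).map (· + 1)).prod ∧
    (∀ γ : GL (Fin 2) B, IsUnit (rhoStar p l (γ : Matrix (Fin 2) (Fin 2) B))) ∧
    (∀ γ δ : GL (Fin 2) B,
      rhoStar p l ((γ * δ : GL (Fin 2) B) : Matrix (Fin 2) (Fin 2) B) =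
        rhoStar p l (γ : Matrix (Fin 2) (Fin 2) B) *
          rhoStar p l (δ : Matrix (Fin 2) (Fin 2) B)) ∧
    (∃ (U : Matrix (goodIdx p l) (tensorIdx p l) B) (V : Matrix (tensorIdx p l) (goodIdx p l) B),
      U * V = 1 ∧ V * U = 1 ∧
      ∀ γ : GL (Fin 2) B,
        rhoStar p l (γ : Matrix (Fin 2) (Fin 2) B) * U =
          U * rhoTensor p l (γ : Matrix (Fin 2) (Fin 2) B)) := by
  haveI hpf : Fact p.Prime := ⟨hp⟩
  have hcard : Fintype.card (goodIdx p l) = ((Nat.digits p l).map (· + 1)).prod := by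
    rw [Fintype.card_congr (SP5.digEquiv hp l), Fintype.card_pi]
    simp only [Fintype.card_fin]
    conv_rhs => rw [← List.ofFn_get (Nat.digits p l)]
    rw [List.map_ofFn, List.prod_ofFn]
    rfl
  refine ⟨hcard, ?_⟩
  rcases subsingleton_or_nontrivial B with hB | hB
  · haveI hms : ∀ m n : Type, Subsingleton (Matrix m n B) :=
      fun m n => ⟨fun a b => by funext i j; exact Subsingleton.elim _ _⟩
    refine ⟨fun γ => ⟨⟨rhoStar p l (γ : Matrix (Fin 2) (Fin 2) B), 1,
        Subsingleton.elim _ _, Subsingleton.elim _ _⟩, rfl⟩,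
      fun γ δ => Subsingleton.elim _ _,
      Matrix.of (fun _ _ => 1), Matrix.of (fun _ _ => 1),
      Subsingleton.elim _ _, Subsingleton.elim _ _, fun γ => Subsingleton.elim _ _⟩
  · haveI : CharP B p := charP_of_injective_algebraMap (algebraMap (ZMod p) B).injective p
    refine ⟨?_, ?_, ?_⟩
    · intro γ
      have h1 : rhoStar p l (γ : Matrix (Fin 2) (Fin 2) B) *
          rhoStar p l ((γ⁻¹ : GL (Fin 2) B) : Matrix (Fin 2) (Fin 2) B) = 1 := by
        rw [← SP5.rhoStar_mul, ← Units.val_mul, mul_inv_cancel, Units.val_one, SP5.rhoStar_one]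
      have h2 : rhoStar p l ((γ⁻¹ : GL (Fin 2) B) : Matrix (Fin 2) (Fin 2) B) *
          rhoStar p l (γ : Matrix (Fin 2) (Fin 2) B) = 1 := by
        rw [← SP5.rhoStar_mul, ← Units.val_mul, inv_mul_cancel, Units.val_one, SP5.rhoStar_one]
      exact ⟨⟨_, _, h1, h2⟩, rfl⟩
    · intro γ δ
      rw [Units.val_mul]
      exact SP5.rhoStar_mul l _ _
    · set e := SP5.digEquiv hp l with he
      refine ⟨Matrix.of (fun j t => if e j = t then 1 else 0),
        Matrix.of (fun t j => if e j = t then 1 else 0), ?_, ?_, fun γ => SP5.rhoStar_inter hp l _⟩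
      · ext j j'
        rw [Matrix.mul_apply, Matrix.one_apply]
        simp only [Matrix.of_apply, ite_mul, one_mul, zero_mul]
        rw [Finset.sum_ite_eq Finset.univ (e j) (fun t => if e j' = t then (1 : B) else 0),
          if_pos (Finset.mem_univ _)]
        exact if_congr (by rw [Equiv.apply_eq_iff_eq, eq_comm]) rfl rfl
      · ext t t'
        rw [Matrix.mul_apply, Matrix.one_apply]
        simp only [Matrix.of_apply, ite_mul, one_mul, zero_mul, mul_ite, mul_one, mul_zero]
        rw [Equiv.sum_comp e (fun s => if s = t' then (if s = t then (1 : B) else 0) else 0)]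
        rw [Finset.sum_ite_eq' Finset.univ t' (fun s => if s = t then (1 : B) else 0),
          if_pos (Finset.mem_univ _)]
        exact if_congr eq_comm rfl rfl
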